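/- Let p be an odd prime and c ∈ F_p with c ≠ ±2 and c^2 - 4 a nonzero square in F_p. Then the trinomial coefficient T(p-2,1), computed in F_p, equals -2/(c^2-4). -/

import Mathlib

open Polynomial LaurentPolynomial Finset

/-- The trinomial coefficient: coefficient of `x^k` in `(x + c + x⁻¹)^n` over `R`. -/
noncomputable def triCoeff (R : Type*) [CommRing R] (c : R) (n : ℕ) (k : ℤ) : R :=
  (((LaurentPolynomial.T 1 + LaurentPolynomial.C c + LaurentPolynomial.T (-1)) ^ n :
      LaurentPolynomial R).coeff : ℤ →₀ R) k

lemma triCoeff_eq (R : Type*) [CommRing R] (c : R) (n : ℕ) :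
    triCoeff R c n 1 = ((X ^ 2 + Polynomial.C c * X + 1 : R[X]) ^ n).coeff (n + 1) := by
  unfold triCoeff
  have h1 : (T 1 + LaurentPolynomial.C c + T (-1) : R[T;T⁻¹])
      = toLaurent (X ^ 2 + Polynomial.C c * X + 1) * T (-1) := by
    rw [map_add, map_add, map_mul, Polynomial.toLaurent_X_pow, Polynomial.toLaurent_C,
      Polynomial.toLaurent_X, map_one]
    rw [add_mul, add_mul, mul_T_assoc, one_mul]
    rw [← T_add, show ((2:ℕ):ℤ) + -1 = 1 by norm_num, show (1:ℤ) + -1 = 0 by norm_num, T_zero, mul_one]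
  have h2 : ((T 1 + LaurentPolynomial.C c + T (-1)) ^ n : R[T;T⁻¹])
      = toLaurent ((X ^ 2 + Polynomial.C c * X + 1) ^ n) * T (-(n : ℤ)) := by
    rw [h1, mul_pow, T_pow, map_pow]
    norm_num
  rw [h2]
  have h3 := AddMonoidAlgebra.coeff_mul_single_apply
    (toLaurent ((X ^ 2 + Polynomial.C c * X + 1) ^ n)) (1 : R) (-(n : ℤ)) 1
  rw [show (T (-(n:ℤ)) : R[T;T⁻¹]) = AddMonoidAlgebra.single (-(n:ℤ)) 1 from rfl]
  rw [h3]
  rw [mul_one, coeff_toLaurent]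
  rw [show (1 + - -(n:ℤ)) = (Nat.castEmbedding (n+1 : ℕ) : ℤ) by simp; ring]
  rw [Finsupp.mapDomain_apply Nat.castEmbedding.injective]
  rfl

section aux
variable {p : ℕ} [Fact p.Prime]

section aux
variable {p : ℕ} [Fact p.Prime]

lemma sum_univ_zmod (hp : p ≠ 2) : ∑ x : ZMod p, x = 0 := by
  have h : ∑ x : ZMod p, x = ∑ x : ZMod p, -x :=
    Fintype.sum_bijective (fun x : ZMod p => -x) neg_involutive.bijective _ _
      (fun x => (neg_neg x).symm)
  rw [Finset.sum_neg_distrib] at h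
  have h2 : (2 : ZMod p) ≠ 0 := by
    intro hh
    have : ((2:ℕ) : ZMod p) = 0 := by push_cast; exact hh
    rw [ZMod.natCast_eq_zero_iff] at this
    exact hp ((Nat.prime_dvd_prime_iff_eq (Fact.out) Nat.prime_two).mp this)
  have : (2 : ZMod p) * ∑ x : ZMod p, x = 0 := by rw [two_mul]; linear_combination h
  rcases mul_eq_zero.mp this with h' | h'
  · exact absurd h' h2
  · exact h'

lemma sum_inv_zmod (hp : p ≠ 2) : ∑ x : ZMod p, x⁻¹ = 0 := by
  have h : ∑ x : ZMod p, x⁻¹ = ∑ x : ZMod p, x :=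
    Fintype.sum_bijective (fun x : ZMod p => x⁻¹) inv_involutive.bijective _ _
      (fun x => (inv_inv x).symm) |>.symm
  rw [h, sum_univ_zmod hp]

lemma sum_inv_shift_zmod (hp : p ≠ 2) (t : ZMod p) : ∑ x : ZMod p, (x - t)⁻¹ = 0 := by
  have h : ∑ x : ZMod p, x⁻¹ = ∑ x : ZMod p, (x - t)⁻¹ :=
    Fintype.sum_bijective (fun x : ZMod p => x + t) (Equiv.addRight t).bijective
      (fun x => x⁻¹) (fun x => (x - t)⁻¹) (fun x => by simp)
  rw [← h, sum_inv_zmod hp]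

lemma sum_key (hp : p ≠ 2) {d : ZMod p} (hd : d ≠ 0) :
    ∑ u : ZMod p, (u * (u - d))⁻¹ = 2 * (d * d)⁻¹ := by
  classical
  set s : Finset (ZMod p) := (Finset.univ.erase d).erase 0 with hs
  have h1 : ∑ u : ZMod p, (u * (u - d))⁻¹ = ∑ u ∈ s, (u * (u - d))⁻¹ := by
    rw [hs, Finset.sum_erase _ (by simp), Finset.sum_erase _ (by simp)]
  have h2 : ∑ u ∈ s, (u * (u - d))⁻¹ = ∑ u ∈ s, d⁻¹ * ((u - d)⁻¹ - u⁻¹) := by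
    refine Finset.sum_congr rfl fun u hu => ?_
    have hu0 : u ≠ 0 := (Finset.mem_erase.mp hu).1
    have hud : u ≠ d := (Finset.mem_erase.mp (Finset.mem_erase.mp hu).2).1
    have hud' : u - d ≠ 0 := sub_ne_zero.mpr hud
    field_simp
    ring
  have hsu : ∑ u ∈ s, u⁻¹ = -d⁻¹ := by
    have e1 : ∑ u ∈ Finset.univ.erase d, (u:ZMod p)⁻¹ = 0 - d⁻¹ := by
      rw [← sum_inv_zmod hp, Finset.sum_erase_eq_sub (Finset.mem_univ d)]
    have e2 : ∑ u ∈ s, (u:ZMod p)⁻¹ = (0 - d⁻¹) - 0⁻¹ := by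
      rw [← e1, hs, Finset.sum_erase_eq_sub (Finset.mem_erase.mpr ⟨Ne.symm hd, Finset.mem_univ 0⟩)]
    rw [e2]; simp
  have hsd : ∑ u ∈ s, (u - d)⁻¹ = d⁻¹ := by
    have e1 : ∑ u ∈ Finset.univ.erase d, (u - d)⁻¹ = 0 - (d - d)⁻¹ := by
      rw [← sum_inv_shift_zmod hp d, Finset.sum_erase_eq_sub (Finset.mem_univ d)]
    have e2 : ∑ u ∈ s, (u - d)⁻¹ = (0 - (d-d)⁻¹) - (0 - d)⁻¹ := by
      rw [← e1, hs, Finset.sum_erase_eq_sub (Finset.mem_erase.mpr ⟨Ne.symm hd, Finset.mem_univ 0⟩)]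
    rw [e2]; simp [inv_neg]
  rw [h1, h2, ← Finset.mul_sum, Finset.sum_sub_distrib, hsu, hsd]
  rw [mul_inv]
  ring



lemma units_sum_eq (g : ZMod p → ZMod p) :
    ∑ x : (ZMod p)ˣ, g (x : ZMod p) = ∑ x ∈ Finset.univ \ {(0 : ZMod p)}, g x := by
  classical
  let φ : (ZMod p)ˣ ↪ ZMod p := ⟨fun x => x, Units.val_injective⟩
  have h : Finset.univ.map φ = Finset.univ \ {0} := by
    ext x
    simp only [Finset.mem_map, Finset.mem_univ, Function.Embedding.coeFn_mk, true_and,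
      Finset.mem_sdiff, Finset.mem_singleton, φ]
    exact isUnit_iff_ne_zero
  rw [← h, Finset.sum_map]
  rfl

lemma coeff_extract (hp : p ≠ 2) (f : Polynomial (ZMod p)) (hdeg : f.natDegree < 2*p - 3) :
    ∑ x : (ZMod p)ˣ, f.eval (x : ZMod p) = -(f.coeff 0 + f.coeff (p-1)) := by
  classical
  have hp3 : 3 ≤ p := by have := (Fact.out : p.Prime).two_le; omega
  calc ∑ x : (ZMod p)ˣ, f.eval (x:ZMod p)
      = ∑ x : (ZMod p)ˣ, ∑ i ∈ range (2*p-3), f.coeff i * (x:ZMod p)^i :=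
        Finset.sum_congr rfl fun x _ => eval_eq_sum_range' hdeg _
    _ = ∑ i ∈ range (2*p-3), ∑ x : (ZMod p)ˣ, f.coeff i * (x:ZMod p)^i := Finset.sum_comm
    _ = ∑ i ∈ range (2*p-3), f.coeff i * ∑ x : (ZMod p)ˣ, (x:ZMod p)^i := by
        simp_rw [Finset.mul_sum]
    _ = ∑ i ∈ range (2*p-3), f.coeff i * (if p - 1 ∣ i then -1 else 0) := by
        refine Finset.sum_congr rfl fun i _ => ?_
        have h := FiniteField.sum_pow_units (ZMod p) i
        rw [ZMod.card] at h
        rw [h]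
    _ = ∑ i ∈ (range (2*p-3)).filter (fun i => p - 1 ∣ i), -f.coeff i := by
        rw [Finset.sum_filter]
        refine Finset.sum_congr rfl fun i _ => ?_
        split_ifs <;> simp
    _ = -(f.coeff 0 + f.coeff (p-1)) := by
        have hfil : (range (2*p-3)).filter (fun i => p - 1 ∣ i) = {0, p-1} := by
          ext i
          simp only [Finset.mem_filter, Finset.mem_range, Finset.mem_insert, Finset.mem_singleton]
          constructor
          · rintro ⟨hi, k, rfl⟩
            have h2 : k < 2 := by
              by_contra hk
              push_neg at hk
              have : (p-1) * 2 ≤ (p-1) * k := Nat.mul_le_mul_left _ hk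
              omega
            interval_cases k <;> omega
          · rintro (rfl | rfl)
            · exact ⟨by omega, ⟨0, by ring⟩⟩
            · exact ⟨by omega, ⟨1, by ring⟩⟩
        rw [hfil, Finset.sum_insert (by simp; omega), Finset.sum_singleton]
        ring


end aux


theorem tri_p_sub_two_one_sq (p : ℕ) [Fact p.Prime] (hp : p ≠ 2) (c : ZMod p)
    (hc2 : c ≠ 2) (hc2' : c ≠ -2) (hsq : IsSquare (c ^ 2 - 4)) (hne : c ^ 2 - 4 ≠ 0) :
    triCoeff (ZMod p) c (p - 2) 1 = -2 / (c ^ 2 - 4) := by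
  classical
  obtain ⟨r, hr⟩ := hsq
  have hp3 : 3 ≤ p := by have := (Fact.out : p.Prime).two_le; omega
  rw [triCoeff_eq (ZMod p) c (p-2), show (p-2)+1 = p-1 by omega]
  have h2 : (2 : ZMod p) ≠ 0 := by
    intro hh
    have h' : ((2:ℕ) : ZMod p) = 0 := by push_cast; exact hh
    rw [ZMod.natCast_eq_zero_iff] at h'
    exact hp ((Nat.prime_dvd_prime_iff_eq Fact.out Nat.prime_two).mp h')
  have hr0 : r ≠ 0 := by rintro rfl; exact hne (by rw [hr, mul_zero])
  set α : ZMod p := (-c + r) / 2 with hα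
  set β : ZMod p := (-c - r) / 2 with hβ
  have hadd : α + β = -c := by rw [hα, hβ]; field_simp; ring
  have hmul : α * β = 1 := by rw [hα, hβ]; field_simp; linear_combination hr
  have hd : β - α = -r := by rw [hα, hβ]; field_simp; ring
  have hdne : β - α ≠ 0 := by rw [hd]; exact neg_ne_zero.mpr hr0
  have hdd : (β - α) * (β - α) = c^2 - 4 := by rw [hd, neg_mul_neg, ← hr]
  clear_value α β
  have hfact : ∀ x : ZMod p, x^2 + c*x + 1 = (x - α) * (x - β) := by
    intro x
    linear_combination x * hadd - hmul
  have hinv : ∀ a : ZMod p, a ^ (p - 2) = a⁻¹ := by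
    intro a
    rcases eq_or_ne a 0 with rfl | ha
    · rw [zero_pow (by omega), inv_zero]
    · have h1 : a ^ (p - 1) = 1 := ZMod.pow_card_sub_one_eq_one ha
      have hm : a * a ^ (p - 2) = 1 := by
        rw [← pow_succ', show p - 2 + 1 = p - 1 by omega]
        exact h1
      exact (inv_eq_of_mul_eq_one_right hm).symm
  set f : Polynomial (ZMod p) := (X^2 + Polynomial.C c * X + 1)^(p-2) with hf
  have hdeg : f.natDegree < 2*p - 3 := by
    have h1 : (X^2 + Polynomial.C c * X + 1 : Polynomial (ZMod p)).natDegree ≤ 2 := by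
      compute_degree
    calc f.natDegree ≤ (p-2) * 2 :=
          le_trans natDegree_pow_le (Nat.mul_le_mul_left _ h1)
      _ < 2*p - 3 := by omega
  have hcoe0 : f.coeff 0 = 1 := by
    rw [coeff_zero_eq_eval_zero, hf]; simp
  have heval : ∀ x : ZMod p, f.eval x = (x^2 + c*x + 1)⁻¹ := by
    intro x
    rw [hf, eval_pow, hinv]
    simp
  have hS : ∑ x : ZMod p, ((x - α) * (x - β))⁻¹ = 2 * (c^2-4)⁻¹ := by
    have hb : ∑ x : ZMod p, ((x - α) * (x - β))⁻¹ = ∑ u : ZMod p, (u * (u - (β - α)))⁻¹ :=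
      (Fintype.sum_bijective (fun u : ZMod p => u + α) (Equiv.addRight α).bijective
        (fun u => (u * (u - (β - α)))⁻¹) (fun x => ((x - α) * (x - β))⁻¹) (fun u => by
          ring_nf)).symm
    rw [hb, sum_key hp hdne, hdd]
  have hsum_units : ∑ x : (ZMod p)ˣ, f.eval (x : ZMod p) = 2*(c^2-4)⁻¹ - 1 := by
    rw [units_sum_eq (fun x => f.eval x)]
    have e1 : ∑ x ∈ Finset.univ \ {(0:ZMod p)}, f.eval x
        = (∑ x : ZMod p, f.eval x) - f.eval 0 := by
      rw [Finset.sum_sdiff_eq_sub (Finset.singleton_subset_iff.mpr (Finset.mem_univ 0)),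
        Finset.sum_singleton]
    have he0 : f.eval 0 = 1 := by rw [hf]; simp
    have e2 : ∑ x : ZMod p, f.eval x = 2*(c^2-4)⁻¹ := by
      rw [← hS]
      refine Finset.sum_congr rfl fun x _ => ?_
      rw [heval, hfact]
    rw [e1, e2, he0]
  have hext := coeff_extract hp f hdeg
  rw [hsum_units, hcoe0] at hext
  have hc : f.coeff (p-1) = -2 * (c^2-4)⁻¹ := by linear_combination hext
  rw [hc, div_eq_mul_inv]
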